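/- For n ≥ 3, the adjacency matrix over ℝ of the cycle graph C_n on n vertices is invertible if and only if n is not divisible by 4. -/

import Mathlib

open Matrix Finset
open scoped Fin.NatCast Fin.IntCast Fin.CommRing

/-- shift matrix by `m` steps -/
private def Qm (n : ℕ) [NeZero n] (m : ℕ) : Matrix (Fin n) (Fin n) ℝ :=
  fun i j => if i = j + (m : Fin n) then 1 else 0

private lemma Qm_mul {n : ℕ} [NeZero n] (a b : ℕ) : Qm n a * Qm n b = Qm n (a + b) := by
  ext i j
  simp only [Qm, Matrix.mul_apply, mul_boole, Finset.sum_ite_eq',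
    Finset.mem_univ, if_true, Nat.cast_add]
  rw [add_assoc, add_comm (b : Fin n)]

private lemma Qm_zero {n : ℕ} [NeZero n] : Qm n 0 = 1 := by
  ext i j
  simp [Qm, Matrix.one_apply, eq_comm]

private lemma Qm_congr {n : ℕ} [NeZero n] {a b : ℕ} (h : (a : Fin n) = (b : Fin n)) :
    Qm n a = Qm n b := by
  unfold Qm; rw [h]

private lemma key_telescope {n : ℕ} [NeZero n] (m : ℕ) :
    (Qm n 2 + 1) * (∑ j ∈ Finset.range m, (-1 : ℝ) ^ j • Qm n (2 * j)) =
      1 - (-1 : ℝ) ^ m • Qm n (2 * m) := by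
  induction m with
  | zero => simp [Qm_zero]
  | succ m ih =>
    rw [Finset.sum_range_succ, mul_add, ih, mul_smul_comm, add_mul, one_mul, Qm_mul]
    rw [pow_succ]
    have : (2 : ℕ) + 2 * m = 2 * (m + 1) := by ring
    rw [this, smul_add]
    module

private lemma two_ne_zero_fin (k : ℕ) : ((2 : ℕ) : Fin (k + 3)) ≠ 0 := by
  intro h
  rw [Fin.natCast_eq_zero] at h
  have := Nat.le_of_dvd (by norm_num) h
  omega

private lemma adj_eq (k : ℕ) :
    (SimpleGraph.cycleGraph (k + 3)).adjMatrix ℝ = Qm (k + 3) 1 + Qm (k + 3) (k + 2) := by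
  have hm1 : ((k + 2 : ℕ) : Fin (k + 3)) = -1 := by
    have h := Fin.natCast_self (k + 3)
    push_cast at h ⊢
    linear_combination h
  ext i j
  rw [SimpleGraph.adjMatrix_apply]
  have hadj : (SimpleGraph.cycleGraph (k + 3)).Adj i j ↔ i - j = 1 ∨ j - i = 1 :=
    SimpleGraph.cycleGraph_adj (n := k + 1)
  simp only [Qm, Nat.cast_one, hm1, Matrix.add_apply, hadj]
  have e1 : i - j = 1 ↔ i = j + 1 := by
    constructor <;> intro h <;> linear_combination h
  have e2 : j - i = 1 ↔ i = j + (-1) := by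
    constructor <;> intro h <;> linear_combination -h
  simp only [e1, e2]
  have h12 : (1 : Fin (k + 3)) ≠ -1 := by
    intro h
    exact absurd (by push_cast; linear_combination h) (two_ne_zero_fin k)
  by_cases h1 : i = j + 1 <;> by_cases h2 : i = j + (-1) <;>
    simp [h1, h2, h12, h12.symm]

theorem cycleGraph_adjMatrix_isUnit_iff (n : ℕ) (hn : 3 ≤ n) :
    IsUnit ((SimpleGraph.cycleGraph n).adjMatrix ℝ) ↔ ¬ (4 ∣ n) := by
  obtain ⟨k, rfl⟩ : ∃ k, n = k + 3 := ⟨n - 3, by omega⟩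
  constructor
  · -- IsUnit → ¬ 4 ∣ n : kernel vector
    intro hu h4
    set v : Fin (k + 3) → ℝ :=
      fun i => if i.val % 4 = 0 ∨ i.val % 4 = 1 then 1 else -1 with hv
    have hne : ∀ i : Fin (k + 3), i - 1 ≠ i + 1 := by
      intro i h
      exact absurd (by push_cast; linear_combination -h) (two_ne_zero_fin k)
    have hker : ((SimpleGraph.cycleGraph (k + 3)).adjMatrix ℝ).mulVec v = 0 := by
      funext i
      rw [SimpleGraph.adjMatrix_mulVec_apply,
        SimpleGraph.cycleGraph_neighborFinset (n := k + 1), Finset.sum_pair (hne i)]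
      have hadd : (i + 1).val % 4 = (i.val + 1) % 4 := by
        rw [Fin.add_def, Fin.val_one, Nat.mod_mod_of_dvd _ h4]
      have hsub : (i - 1).val % 4 = (i.val + 3) % 4 := by
        rw [Fin.sub_def, Fin.val_one, Nat.mod_mod_of_dvd _ h4]
        obtain ⟨t, ht⟩ := h4
        omega
      show v (i - 1) + v (i + 1) = 0
      simp only [hv, Pi.zero_apply]
      split_ifs with ha hb hb
      · exfalso; omega
      · norm_num
      · norm_num
      · exfalso; omega
    have hinj := Matrix.mulVec_injective_iff_isUnit.mpr hu
    have hv0 : v = 0 := by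
      apply hinj
      rw [hker, Matrix.mulVec_zero]
    have h0 : v ⟨0, by omega⟩ = 1 := by simp [hv]
    rw [hv0] at h0
    simp at h0
  · -- ¬ 4 ∣ n → IsUnit
    intro h4
    obtain ⟨m, hmodd, hdvd⟩ : ∃ m, Odd m ∧ (k + 3) ∣ 2 * m := by
      rcases Nat.even_or_odd (k + 3) with he | ho
      · obtain ⟨m, hm⟩ := he
        refine ⟨m, ?_, ⟨1, by omega⟩⟩
        rcases Nat.even_or_odd m with hme | hmo
        · exact absurd ⟨m / 2, by obtain ⟨t, ht⟩ := hme; omega⟩ h4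
        · exact hmo
      · exact ⟨k + 3, ho, ⟨2, by ring⟩⟩
    set B := ∑ j ∈ Finset.range m, (-1 : ℝ) ^ j • Qm (k + 3) (2 * j) with hB
    have hQ2m : Qm (k + 3) (2 * m) = 1 := by
      rw [Qm_congr (b := 0) (by rw [Nat.cast_zero]; exact Fin.natCast_eq_zero.mpr hdvd),
        Qm_zero]
    have hkey : (Qm (k + 3) 2 + 1) * B = (2 : ℝ) • 1 := by
      rw [hB, key_telescope, hmodd.neg_one_pow, hQ2m]
      module
    have hcast : ((k + 2 + 2 : ℕ) : Fin (k + 3)) = ((1 : ℕ) : Fin (k + 3)) := by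
      have h := Fin.natCast_self (k + 3)
      push_cast at h ⊢
      linear_combination h
    have hA : (SimpleGraph.cycleGraph (k + 3)).adjMatrix ℝ
        = Qm (k + 3) (k + 2) * (Qm (k + 3) 2 + 1) := by
      rw [mul_add, mul_one, Qm_mul, adj_eq, Qm_congr hcast]
    have hcast2 : ((k + 2 + 1 : ℕ) : Fin (k + 3)) = ((0 : ℕ) : Fin (k + 3)) := by
      rw [Nat.cast_zero]
      exact Fin.natCast_eq_zero.mpr ⟨1, by ring⟩
    refine (Matrix.isUnit_iff_isUnit_det _).mpr
      (Matrix.isUnit_det_of_right_inverse (B := (2 : ℝ)⁻¹ • (B * Qm (k + 3) 1)) ?_)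
    rw [hA, mul_smul_comm, mul_assoc, ← mul_assoc (Qm (k + 3) 2 + 1), hkey]
    rw [smul_mul_assoc, one_mul, mul_smul_comm, Qm_mul, smul_smul]
    rw [Qm_congr hcast2, Qm_zero]
    norm_num
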